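/- Let a and b be coprime odd integers, let β ≥ 2 be an integer, and let c and d be odd positive integers. Then there exists a positive integer k such that 2^β·c·d divides a^k + b^k if and only if there exists a positive integer k₁ such that 2^β·c divides a^{k₁} + b^{k₁} and there exists a positive integer k₂ such that 2^β·d divides a^{k₂} + b^{k₂}. -/

import Mathlib

private lemma odd_exp_of_four_dvd {a b : ℤ} (ha : Odd a) (hb : Odd b) {k : ℕ}
    (hk : 0 < k) (h : (4 : ℤ) ∣ a ^ k + b ^ k) : Odd k := by
  rcases Nat.even_or_odd k with he | ho
  · exfalso
    obtain ⟨m, rfl⟩ := he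
    have h1 : (a ^ m) ^ 2 % 4 = 1 := Int.sq_mod_four_eq_one_of_odd (ha.pow)
    have h2 : (b ^ m) ^ 2 % 4 = 1 := Int.sq_mod_four_eq_one_of_odd (hb.pow)
    have hrw : a ^ (m + m) + b ^ (m + m) = (a ^ m) ^ 2 + (b ^ m) ^ 2 := by ring
    rw [hrw] at h
    omega
  · exact ho

private lemma key_lte {a b : ℤ} (hco : IsCoprime a b) {p : ℕ} (pp : p.Prime) (hp2 : p ≠ 2)
    {j m : ℕ} (hm : Odd m) {e f : ℕ} (he : 1 ≤ e)
    (hpe : (p : ℤ) ^ e ∣ a ^ j + b ^ j) (hpf : p ^ f ∣ m) :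
    (p : ℤ) ^ (e + f) ∣ a ^ (j * m) + b ^ (j * m) := by
  set x := a ^ j with hx
  set y := b ^ j with hy
  have hpxy : (p : ℤ) ∣ x + y := dvd_trans (dvd_pow_self (p : ℤ) (by omega : e ≠ 0)) hpe
  have hpx : ¬ (p : ℤ) ∣ x := by
    intro hdvd
    have hpZ : Prime (p : ℤ) := Nat.prime_iff_prime_int.mp pp
    have hda : (p : ℤ) ∣ a := hpZ.dvd_of_dvd_pow hdvd
    have hdb : (p : ℤ) ∣ b := hpZ.dvd_of_dvd_pow (n := j) ((dvd_add_right hdvd).mp hpxy)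
    have := Int.isUnit_iff.mp (hco.isUnit_of_dvd' hda hdb)
    have h2 := pp.two_le
    omega
  have hlte := Int.emultiplicity_pow_add_pow pp (pp.odd_of_ne_two hp2) hpxy hpx hm
  have h1 : ((e : ℕ) : ℕ∞) ≤ emultiplicity (p : ℤ) (x + y) := le_emultiplicity_of_pow_dvd hpe
  have h2 : ((f : ℕ) : ℕ∞) ≤ emultiplicity p m := le_emultiplicity_of_pow_dvd hpf
  have h3 : ((e + f : ℕ) : ℕ∞) ≤ emultiplicity (p : ℤ) (x ^ m + y ^ m) := by
    rw [hlte]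
    push_cast
    exact add_le_add h1 h2
  have h4 := pow_dvd_of_le_emultiplicity h3
  rwa [hx, hy, ← pow_mul, ← pow_mul] at h4

/-- Let `a` and `b` be coprime odd integers, `β ≥ 2`, and `c`, `d` odd positive integers.
Then `cd` is `2^β`-good if and only if both `c` and `d` are `2^β`-good. -/
theorem mul_good_iff_good_and_good
    (a b : ℤ) (ha : Odd a) (hb : Odd b) (hco : IsCoprime a b)
    (β : ℕ) (hβ : 2 ≤ β) (c d : ℕ) (hc : 0 < c) (hd : 0 < d)
    (hoc : Odd c) (hod : Odd d) :
    (∃ k : ℕ, 0 < k ∧ ((2 ^ β * (c * d) : ℕ) : ℤ) ∣ a ^ k + b ^ k) ↔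
      ((∃ k₁ : ℕ, 0 < k₁ ∧ ((2 ^ β * c : ℕ) : ℤ) ∣ a ^ k₁ + b ^ k₁) ∧
        (∃ k₂ : ℕ, 0 < k₂ ∧ ((2 ^ β * d : ℕ) : ℤ) ∣ a ^ k₂ + b ^ k₂)) := by
  constructor
  · rintro ⟨k, hk, hdvd⟩
    constructor
    · exact ⟨k, hk, dvd_trans (by exact_mod_cast Nat.mul_dvd_mul_left _ (dvd_mul_right c d)) hdvd⟩
    · exact ⟨k, hk, dvd_trans (by exact_mod_cast Nat.mul_dvd_mul_left _ (dvd_mul_left d c)) hdvd⟩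
  · rintro ⟨⟨k₁, hk₁, hdvd₁⟩, ⟨k₂, hk₂, hdvd₂⟩⟩
    have hfour : ∀ e : ℕ, (4 : ℤ) ∣ ((2 ^ β * e : ℕ) : ℤ) := by
      intro e
      have : (4 : ℕ) ∣ 2 ^ β * e := by
        refine dvd_mul_of_dvd_left ?_ e
        calc (4 : ℕ) = 2 ^ 2 := rfl
          _ ∣ 2 ^ β := pow_dvd_pow 2 hβ
      exact_mod_cast Int.natCast_dvd_natCast.mpr this
    have hok₁ : Odd k₁ := odd_exp_of_four_dvd ha hb hk₁ ((hfour c).trans hdvd₁)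
    have hok₂ : Odd k₂ := odd_exp_of_four_dvd ha hb hk₂ ((hfour d).trans hdvd₂)
    set k := k₁ * (k₂ * (c * d)) with hkdef
    have hkpos : 0 < k := by positivity
    refine ⟨k, hkpos, ?_⟩
    set N := a ^ k + b ^ k with hN
    have hm₁ : Odd (k₂ * (c * d)) := hok₂.mul (hoc.mul hod)
    have hm₂ : Odd (k₁ * (c * d)) := hok₁.mul (hoc.mul hod)
    have hA1 : a ^ k₁ + b ^ k₁ ∣ N := by
      have hrw : N = (a ^ k₁) ^ (k₂ * (c * d)) + (b ^ k₁) ^ (k₂ * (c * d)) := by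
        rw [← pow_mul, ← pow_mul]
      rw [hrw]
      exact Odd.add_dvd_pow_add_pow _ _ hm₁
    have hA2 : a ^ k₂ + b ^ k₂ ∣ N := by
      have hrw : N = (a ^ k₂) ^ (k₁ * (c * d)) + (b ^ k₂) ^ (k₁ * (c * d)) := by
        rw [← pow_mul, ← pow_mul, hN, hkdef]; ring_nf
      rw [hrw]
      exact Odd.add_dvd_pow_add_pow _ _ hm₂
    rcases eq_or_ne N 0 with hN0 | hN0
    · rw [hN0]; exact dvd_zero _
    set n := N.natAbs with hn
    have hn0 : n ≠ 0 := Int.natAbs_ne_zero.mpr hN0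
    have hcd0 : c * d ≠ 0 := by positivity
    have hnat : (2 ^ β * (c * d)) ∣ n := by
      have hcop : Nat.Coprime (2 ^ β) (c * d) :=
        Nat.Coprime.pow_left _ (Nat.coprime_two_left.mpr (hoc.mul hod))
      refine hcop.mul_dvd_of_dvd_of_dvd ?_ ?_
      · -- 2^β divides n
        have h1 : ((2 ^ β : ℕ) : ℤ) ∣ ((2 ^ β * c : ℕ) : ℤ) :=
          Int.natCast_dvd_natCast.mpr (dvd_mul_right _ _)
        exact Int.natCast_dvd.mp (h1.trans (hdvd₁.trans hA1))
      · -- c * d divides n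
        rw [← Nat.factorization_le_iff_dvd hcd0 hn0, Finsupp.le_def]
        intro p
        by_cases pp : p.Prime
        swap
        · simp [Nat.factorization_eq_zero_of_not_prime _ pp]
        by_cases hp2 : p = 2
        · subst hp2
          have : ¬ (2 ∣ c * d) := by
            simpa [Nat.two_dvd_ne_zero, ← Nat.odd_iff] using (hoc.mul hod)
          simp [Nat.factorization_eq_zero_of_not_dvd this]
        rw [Nat.factorization_mul hc.ne' hd.ne']
        simp only [Finsupp.coe_add, Pi.add_apply]
        set vc := c.factorization p with hvc
        set vd := d.factorization p with hvd
        rw [← Nat.Prime.pow_dvd_iff_le_factorization pp hn0, ← Int.natCast_dvd, Nat.cast_pow]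
        by_cases pc : p ∣ c
        · -- use k = k₁ * (k₂ * (c*d)), e = vc, f = vd
          have he : 1 ≤ vc := (Nat.Prime.factorization_pos_of_dvd pp hc.ne' pc)
          have hpe : (p : ℤ) ^ vc ∣ a ^ k₁ + b ^ k₁ := by
            refine dvd_trans ?_ hdvd₁
            have : (p ^ vc : ℕ) ∣ 2 ^ β * c :=
              dvd_mul_of_dvd_right (Nat.ordProj_dvd c p) _
            exact_mod_cast Int.natCast_dvd_natCast.mpr this
          have hpf : p ^ vd ∣ k₂ * (c * d) :=
            dvd_mul_of_dvd_right (dvd_mul_of_dvd_right (Nat.ordProj_dvd d p) c) k₂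
          exact key_lte hco pp hp2 hm₁ he hpe hpf
        · have hvc0 : vc = 0 := hvc.trans (Nat.factorization_eq_zero_of_not_dvd pc)
          rw [hvc0, zero_add]
          by_cases pd : p ∣ d
          · have he : 1 ≤ vd := (Nat.Prime.factorization_pos_of_dvd pp hd.ne' pd)
            have hpe : (p : ℤ) ^ vd ∣ a ^ k₂ + b ^ k₂ := by
              refine dvd_trans ?_ hdvd₂
              have : (p ^ vd : ℕ) ∣ 2 ^ β * d :=
                dvd_mul_of_dvd_right (Nat.ordProj_dvd d p) _
              exact_mod_cast Int.natCast_dvd_natCast.mpr this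
            have hpf : p ^ 0 ∣ k₁ * (c * d) := by simp
            have hkey := key_lte hco pp hp2 hm₂ he hpe hpf
            rw [add_zero] at hkey
            have hrw : k = k₂ * (k₁ * (c * d)) := by rw [hkdef]; ring
            simpa [hN, hrw] using hkey
          · have hvd0 : vd = 0 := hvd.trans (Nat.factorization_eq_zero_of_not_dvd pd)
            simp [hvd0]
    calc ((2 ^ β * (c * d) : ℕ) : ℤ) ∣ (n : ℤ) := Int.natCast_dvd_natCast.mpr hnat
      _ ∣ N := Int.natAbs_dvd.mpr dvd_rfl
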